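/- Let k ≥ 3 and let m ≥ C(k,2) − 1 be an integer. Write m = C(k−1,2) + a(k−1) + b with a ≥ 0, 0 ≤ b ≤ k−2, and m = C(k−2,2) + a'(k−2) + b' with a' ≥ 2, 0 ≤ b' ≤ k−3; note that m' = m + (k−1)(k−2) has parameter representations (a + k−2, b) and (a' + k−1, b') respectively. Then H(k, a+k−2, b) − H(k−1, a'+k−1, b') ≥ H(k, a, b) − H(k−1, a', b'), i.e. h(C(m',k)) − h(C(m',k−1)) ≥ h(C(m,k)) − h(C(m,k−1)); moreover this inequality is strict when m = C(k,2) − 1. -/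

import Mathlib

set_option maxHeartbeats 1000000


/-- `f x = x * log x` (note `Real.log 0 = 0`, so `f 0 = 0`). -/
noncomputable def f (x : ℝ) : ℝ := x * Real.log x

/-- `H k a b = h(C(m,k))` for `m = C(k-1,2) + a(k-1) + b`. -/
noncomputable def H (k a b : ℕ) : ℝ :=
  b * f ((k : ℝ) - 1 + a) + ((k : ℝ) - 1 - b) * f ((k : ℝ) - 2 + a) +
    a * f ((k : ℝ) - 1) + f b

lemma f_convex : StrictConvexOn ℝ (Set.Ici (0:ℝ)) f := Real.strictConvexOn_mul_log

lemma f_scale {c x : ℝ} (hc : 0 < c) (hx : 0 < x) :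
    f (c * x) = c * f x + c * x * Real.log c := by
  unfold f
  rw [Real.log_mul hc.ne' hx.ne']
  ring

lemma secant_le {y1 y2 x1 x2 : ℝ} (hy1 : 0 ≤ y1) (h11 : y1 ≤ x1) (h22 : y2 ≤ x2)
    (hy : y1 < y2) (hx : x1 < x2) :
    (f y2 - f y1) / (y2 - y1) ≤ (f x2 - f x1) / (x2 - x1) := by
  have hC : ConvexOn ℝ (Set.Ici (0:ℝ)) f := f_convex.convexOn
  have my1 : y1 ∈ Set.Ici (0:ℝ) := hy1
  have my2 : y2 ∈ Set.Ici (0:ℝ) := by simp only [Set.mem_Ici]; linarith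
  have mx1 : x1 ∈ Set.Ici (0:ℝ) := by simp only [Set.mem_Ici]; linarith
  have mx2 : x2 ∈ Set.Ici (0:ℝ) := by simp only [Set.mem_Ici]; linarith
  have step1 : (f y2 - f y1) / (y2 - y1) ≤ (f x2 - f y1) / (x2 - y1) :=
    hC.secant_mono my1 my2 mx2 hy.ne' (by linarith : x2 ≠ y1).symm.symm h22
  have step2' := hC.secant_mono mx2 my1 mx1 (by linarith : y1 ≠ x2) (by linarith : x1 ≠ x2) h11
  have e : (f y1 - f x2) / (y1 - x2) = (f x2 - f y1) / (x2 - y1) := by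
    rw [← neg_div_neg_eq]; congr 1 <;> ring
  have e2 : (f x1 - f x2) / (x1 - x2) = (f x2 - f x1) / (x2 - x1) := by
    rw [← neg_div_neg_eq]; congr 1 <;> ring
  rw [e, e2] at step2'
  linarith

lemma secant_lt {y1 y2 x1 x2 : ℝ} (hy1 : 0 ≤ y1) (h11 : y1 ≤ x1) (h22 : y2 ≤ x2)
    (hy : y1 < y2) (hx : x1 < x2) (hstrict : y1 < x1 ∨ y2 < x2) :
    (f y2 - f y1) / (y2 - y1) < (f x2 - f x1) / (x2 - x1) := by
  have hC : ConvexOn ℝ (Set.Ici (0:ℝ)) f := f_convex.convexOn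
  have my1 : y1 ∈ Set.Ici (0:ℝ) := hy1
  have my2 : y2 ∈ Set.Ici (0:ℝ) := by simp only [Set.mem_Ici]; linarith
  have mx1 : x1 ∈ Set.Ici (0:ℝ) := by simp only [Set.mem_Ici]; linarith
  have mx2 : x2 ∈ Set.Ici (0:ℝ) := by simp only [Set.mem_Ici]; linarith
  have e : (f y1 - f x2) / (y1 - x2) = (f x2 - f y1) / (x2 - y1) := by
    rw [← neg_div_neg_eq]; congr 1 <;> ring
  have e2 : (f x1 - f x2) / (x1 - x2) = (f x2 - f x1) / (x2 - x1) := by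
    rw [← neg_div_neg_eq]; congr 1 <;> ring
  rcases hstrict with hs | hs
  · have step1 : (f y2 - f y1) / (y2 - y1) ≤ (f x2 - f y1) / (x2 - y1) :=
      hC.secant_mono my1 my2 mx2 hy.ne' (by linarith : x2 ≠ y1) h22
    have step2' := f_convex.secant_strict_mono mx2 my1 mx1 (by linarith : y1 ≠ x2)
      (by linarith : x1 ≠ x2) hs
    rw [e, e2] at step2'
    linarith
  · have step1 : (f y2 - f y1) / (y2 - y1) < (f x2 - f y1) / (x2 - y1) :=
      f_convex.secant_strict_mono my1 my2 mx2 hy.ne' (by linarith : x2 ≠ y1) hs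
    have step2' := hC.secant_mono mx2 my1 mx1 (by linarith : y1 ≠ x2)
      (by linarith : x1 ≠ x2) h11
    rw [e, e2] at step2'
    linarith

lemma block_le {p q x1 x2 y1 y2 : ℝ} (hp : 0 ≤ p) (hq : 0 ≤ q) (hy1 : 0 ≤ y1)
    (h11 : y1 ≤ x1) (h22 : y2 ≤ x2) (hyy : y1 ≤ y2) (hxx : x1 ≤ x2)
    (hm : p * (x2 - x1) = q * (y2 - y1)) :
    q * (f y2 - f y1) ≤ p * (f x2 - f x1) := by
  rcases eq_or_lt_of_le hyy with rfl | hy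
  · have h0 : p * (x2 - x1) = 0 := by rw [hm]; ring
    rcases mul_eq_zero.mp h0 with hp0 | hx0
    · rw [hp0]; simp
    · have : x2 = x1 := by linarith [sub_eq_zero.mp hx0]
      rw [this]; simp
  · rcases eq_or_lt_of_le hq with hq0 | hqpos
    · have h0 : p * (x2 - x1) = 0 := by rw [hm, ← hq0]; ring
      rcases mul_eq_zero.mp h0 with hp0 | hx0
      · rw [hp0, ← hq0]; simp
      · have hx : x2 = x1 := by linarith [sub_eq_zero.mp hx0]
        rw [hx, ← hq0]; simp
    · have hmpos : 0 < q * (y2 - y1) := mul_pos hqpos (by linarith)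
      have h1 : 0 < p * (x2 - x1) := by rw [hm]; exact hmpos
      have hx21 : 0 < x2 - x1 := by nlinarith
      have hppos : 0 < p := by nlinarith
      have hs := secant_le hy1 h11 h22 hy (by linarith : x1 < x2)
      rw [div_le_div_iff₀ (by linarith) hx21] at hs
      have h2 := mul_le_mul_of_nonneg_left hs hq
      have e : q * ((f x2 - f x1) * (y2 - y1)) = p * (f x2 - f x1) * (x2 - x1) := by
        calc q * ((f x2 - f x1) * (y2 - y1)) = (f x2 - f x1) * (q * (y2 - y1)) := by ring
          _ = (f x2 - f x1) * (p * (x2 - x1)) := by rw [← hm]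
          _ = p * (f x2 - f x1) * (x2 - x1) := by ring
      have h3 : q * (f y2 - f y1) * (x2 - x1) ≤ p * (f x2 - f x1) * (x2 - x1) := by
        calc q * (f y2 - f y1) * (x2 - x1) = q * ((f y2 - f y1) * (x2 - x1)) := by ring
          _ ≤ q * ((f x2 - f x1) * (y2 - y1)) := h2
          _ = p * (f x2 - f x1) * (x2 - x1) := e
      exact le_of_mul_le_mul_right h3 hx21

lemma block_lt {p q x1 x2 y1 y2 : ℝ} (hp : 0 ≤ p) (hq : 0 ≤ q) (hy1 : 0 ≤ y1)
    (h11 : y1 ≤ x1) (h22 : y2 ≤ x2) (hyy : y1 ≤ y2) (hxx : x1 ≤ x2)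
    (hm : p * (x2 - x1) = q * (y2 - y1)) (hstrict : y1 < x1 ∨ y2 < x2)
    (hmpos : 0 < q * (y2 - y1)) :
    q * (f y2 - f y1) < p * (f x2 - f x1) := by
  have hqpos : 0 < q := by nlinarith
  have hy : y1 < y2 := by nlinarith
  have h1 : 0 < p * (x2 - x1) := by rw [hm]; exact hmpos
  have hx21 : 0 < x2 - x1 := by nlinarith
  have hppos : 0 < p := by nlinarith
  have hs := secant_lt hy1 h11 h22 hy (by linarith : x1 < x2) hstrict
  rw [div_lt_div_iff₀ (by linarith) hx21] at hs
  have h2 := mul_lt_mul_of_pos_left hs hqpos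
  have e : q * ((f x2 - f x1) * (y2 - y1)) = p * (f x2 - f x1) * (x2 - x1) := by
    calc q * ((f x2 - f x1) * (y2 - y1)) = (f x2 - f x1) * (q * (y2 - y1)) := by ring
      _ = (f x2 - f x1) * (p * (x2 - x1)) := by rw [← hm]
      _ = p * (f x2 - f x1) * (x2 - x1) := by ring
  have h3 : q * (f y2 - f y1) * (x2 - x1) < p * (f x2 - f x1) * (x2 - x1) := by
    calc q * (f y2 - f y1) * (x2 - x1) = q * ((f y2 - f y1) * (x2 - x1)) := by ring
      _ < q * ((f x2 - f x1) * (y2 - y1)) := h2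
      _ = p * (f x2 - f x1) * (x2 - x1) := e
  exact lt_of_mul_lt_mul_right h3 hx21.le

lemma f_scale' {a b t s : ℝ} (ha : 0 < a) (hb : 0 < b) (hs : 0 < s) (h : b * t = a * s) :
    b * f t = a * f s + b * t * (Real.log a - Real.log b) := by
  have hlt : Real.log t = Real.log s + (Real.log a - Real.log b) := by
    rw [show t = a * s / b by field_simp; linarith,
      Real.log_div (by positivity) hb.ne', Real.log_mul ha.ne' hs.ne']
    ring
  unfold f
  rw [hlt]
  linear_combination Real.log s * h

lemma key (K A B B' A' : ℝ) (hK : 3 ≤ K) (hA : 0 ≤ A) (hB0 : 0 ≤ B) (hB : B ≤ K-2)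
    (hB'0 : 0 ≤ B') (hB' : B' ≤ K-3)
    (hA' : A' * (K-2) = A*(K-1) + B + (K-2) - B')
    (hcase : B ≤ B' ∨ B' + 1 ≤ B) :
    B'*(f (A'+(2*K-3)) - f (A'+(K-2))) + (K-2-B')*(f (A'+(2*K-4)) - f (A'+(K-3)))
      + (K-1)*f (K-2)
    < B*(f (A+(2*K-3)) - f (A+(K-1))) + (K-1-B)*(f (A+(2*K-4)) - f (A+(K-2)))
      + (K-2)*f (K-1) := by
  have hKm1 : (0:ℝ) < K-1 := by linarith
  have hKm2 : (0:ℝ) < K-2 := by linarith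
  have hKB' : (0:ℝ) < K-2-B' := by linarith
  -- division atom bounds
  have hv0 : (0:ℝ) < (K-2)/(K-1) := by positivity
  have hv1 : (K-2)/(K-1) < 1 := by rw [div_lt_one hKm1]; linarith
  have hw0 : (0:ℝ) < 1/(K-1) := by positivity
  have hw1 : 1/(K-1) ≤ 1 := by rw [div_le_one hKm1]; linarith
  have hvw : (K-2)/(K-1) + 1/(K-1) = 1 := by field_simp; ring
  have hu_le_v : (B-B')/(K-1) ≤ (K-2)/(K-1) := by
    rw [div_le_div_iff₀ hKm1 hKm1]
    nlinarith [mul_le_mul_of_nonneg_right (show B-B' ≤ K-2 by linarith) hKm1.le]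
  have hu_lb2 : 3-K ≤ (B-B')/(K-1) := by
    rw [le_div_iff₀ hKm1]
    nlinarith [mul_nonneg (show (0:ℝ) ≤ K-3 by linarith) (show (0:ℝ) ≤ K-2 by linarith)]
  have huv : (B-B')/(K-1) + (K-2)/(K-1) ≤ K-2 := by
    rw [← add_div, div_le_iff₀ hKm1]
    nlinarith [mul_nonneg (show (0:ℝ) ≤ K-2 by linarith) (show (0:ℝ) ≤ K-3 by linarith)]
  have hS4nn : 0 < A+K-2+(B-B')/(K-1)-(K-2)/(K-1) := by linarith
  have hS3pos : 0 < A+2*K-4+(B-B')/(K-1)-(K-2)/(K-1) := by linarith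
  have hDpos : 0 < A+K-2+(B-B')/(K-1) := by linarith
  have hEpos : 0 < A+2*K-4+(B-B')/(K-1) := by linarith
  -- scaling identities (division-free in coefficients)
  have hE : (K-2) * (A' + (2*K-3)) = (K-1) * (A+2*K-4+(B-B')/(K-1)) := by
    field_simp
    linear_combination hA'
  have hD : (K-2) * (A' + (K-2)) = (K-1) * (A+K-2+(B-B')/(K-1)) := by
    field_simp
    linear_combination hA'
  have hS3 : (K-2) * (A' + (2*K-4)) = (K-1) * (A+2*K-4+(B-B')/(K-1)-(K-2)/(K-1)) := by
    field_simp
    linear_combination hA'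
  have hS4 : (K-2) * (A' + (K-3)) = (K-1) * (A+K-2+(B-B')/(K-1)-(K-2)/(K-1)) := by
    field_simp
    linear_combination hA'
  have hs1 : (K-2) * f (A'+(2*K-3)) = (K-1) * f (A+2*K-4+(B-B')/(K-1))
      + (K-2) * (A'+(2*K-3)) * (Real.log (K-1) - Real.log (K-2)) :=
    f_scale' hKm1 hKm2 hEpos hE
  have hs2 : (K-2) * f (A'+(K-2)) = (K-1) * f (A+K-2+(B-B')/(K-1))
      + (K-2) * (A'+(K-2)) * (Real.log (K-1) - Real.log (K-2)) :=
    f_scale' hKm1 hKm2 hDpos hD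
  have hs3 : (K-2) * f (A'+(2*K-4)) = (K-1) * f (A+2*K-4+(B-B')/(K-1)-(K-2)/(K-1))
      + (K-2) * (A'+(2*K-4)) * (Real.log (K-1) - Real.log (K-2)) :=
    f_scale' hKm1 hKm2 hS3pos hS3
  have hs4 : (K-2) * f (A'+(K-3)) = (K-1) * f (A+K-2+(B-B')/(K-1)-(K-2)/(K-1))
      + (K-2) * (A'+(K-3)) * (Real.log (K-1) - Real.log (K-2)) :=
    f_scale' hKm1 hKm2 hS4nn hS4
  have hpt : (K-2) * f (K-1) = (K-1) * f (K-2)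
      + (K-2) * (K-1) * (Real.log (K-1) - Real.log (K-2)) :=
    f_scale' hKm1 hKm2 hKm2 (by ring)
  rcases hcase with hcs | hcs
  · -- Case II : B ≤ B'
    have hu_np : (B-B')/(K-1) ≤ 0 := by rw [div_le_iff₀ hKm1]; linarith
    have hKB : (0:ℝ) < K-1-B := by linarith
    have ht10 : 0 ≤ B*(K-2)/((K-1)*B') :=
      div_nonneg (mul_nonneg hB0 hKm2.le) (by positivity)
    have ht1v : B*(K-2)/((K-1)*B') ≤ (K-2)/(K-1) := by
      rcases eq_or_lt_of_le hB'0 with h0 | h0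
      · rw [← h0]
        simp
        positivity
      · rw [div_le_div_iff₀ (by positivity) hKm1]
        linarith [mul_nonneg (mul_nonneg (show (0:ℝ) ≤ B'-B by linarith) hKm2.le) hKm1.le]
    have ht50 : 0 ≤ (B'-B+1)/(K-1-B) := div_nonneg (by linarith) (by linarith)
    have ht51 : (B'-B+1)/(K-1-B) ≤ 1 := by
      rw [div_le_one hKB]; linarith
    have hb1 : (K-1)*B' * (f (A+2*K-4+(B-B')/(K-1)) -
        f (A+2*K-4+(B-B')/(K-1) - B*(K-2)/((K-1)*B'))) ≤
        (K-2)*B * (f (A+(2*K-3)) - f (A+(2*K-4))) := by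
      apply block_le (by positivity) (by positivity) (by linarith) (by linarith) (by linarith)
        (by linarith) (by linarith)
      rcases eq_or_lt_of_le hB'0 with h0 | h0
      · have hBz : B = 0 := le_antisymm (by linarith) hB0
        rw [hBz, ← h0]; ring
      · field_simp; ring
    have hb2 : (K-1)*B' * (f (A+2*K-4+(B-B')/(K-1) - B*(K-2)/((K-1)*B')) -
        f (A+2*K-4+(B-B')/(K-1)-(K-2)/(K-1))) ≤
        (K-2)*(K-1) * (f (A+(2*K-4)) - f (A+2*K-4+(B-B')/(K-1))) := by
      apply block_le (by positivity) (by positivity) (by linarith) (by linarith) (by linarith)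
        (by linarith) (by linarith)
      rcases eq_or_lt_of_le hB'0 with h0 | h0
      · have hBz : B = 0 := le_antisymm (by linarith) hB0
        rw [hBz, ← h0]; ring
      · field_simp; ring
    have hb3 : (K-2)*(K-1) * (f (A+2*K-4+(B-B')/(K-1)-(K-2)/(K-1)) - f (A+K-2+1/(K-1))) ≤
        (K-2)*(K-1) * (f (A+2*K-4+(B-B')/(K-1)) - f (A+(K-1))) := by
      apply block_le (by positivity) (by positivity) (by linarith) (by linarith) (by linarith)
        (by linarith) (by linarith)
      field_simp; ring
    have hb4 : (K-2)*(K-1) * (f (A+K-2+1/(K-1)) - f (A+K-2+(B-B')/(K-1))) ≤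
        (K-2)*(K-1-B) * (f (A+(K-1)) - f (A+K-1-(B'-B+1)/(K-1-B))) := by
      apply block_le (by positivity) (by positivity) (by linarith) (by linarith) (by linarith)
        (by linarith) (by linarith)
      field_simp; ring
    have hb5 : (K-1)*(K-2-B') * (f (A+K-2+(B-B')/(K-1)) -
        f (A+K-2+(B-B')/(K-1)-(K-2)/(K-1))) <
        (K-2)*(K-1-B) * (f (A+K-1-(B'-B+1)/(K-1-B)) - f (A+(K-2))) := by
      apply block_lt (by positivity) (by positivity) (by linarith) (by linarith) (by linarith)
        (by linarith) (by linarith)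
      · field_simp; ring
      · left; linarith
      · have h1 : (A+K-2+(B-B')/(K-1)) - (A+K-2+(B-B')/(K-1)-(K-2)/(K-1))
            = (K-2)/(K-1) := by ring
        rw [h1]; positivity
    have hident :
        (K-2) * (B*(f (A+(2*K-3)) - f (A+(K-1))) + (K-1-B)*(f (A+(2*K-4)) - f (A+(K-2)))
          + (K-2)*f (K-1))
        - (K-2) * (B'*(f (A'+(2*K-3)) - f (A'+(K-2))) + (K-2-B')*(f (A'+(2*K-4)) - f (A'+(K-3)))
          + (K-1)*f (K-2))
        = ((K-2)*B * (f (A+(2*K-3)) - f (A+(2*K-4)))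
          + (K-2)*(K-1) * (f (A+(2*K-4)) - f (A+2*K-4+(B-B')/(K-1)))
          + (K-2)*(K-1) * (f (A+2*K-4+(B-B')/(K-1)) - f (A+(K-1)))
          + (K-2)*(K-1-B) * (f (A+(K-1)) - f (A+K-1-(B'-B+1)/(K-1-B)))
          + (K-2)*(K-1-B) * (f (A+K-1-(B'-B+1)/(K-1-B)) - f (A+(K-2))))
        - ((K-1)*B' * (f (A+2*K-4+(B-B')/(K-1)) -
            f (A+2*K-4+(B-B')/(K-1) - B*(K-2)/((K-1)*B')))
          + (K-1)*B' * (f (A+2*K-4+(B-B')/(K-1) - B*(K-2)/((K-1)*B')) -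
            f (A+2*K-4+(B-B')/(K-1)-(K-2)/(K-1)))
          + (K-2)*(K-1) * (f (A+2*K-4+(B-B')/(K-1)-(K-2)/(K-1)) - f (A+K-2+1/(K-1)))
          + (K-2)*(K-1) * (f (A+K-2+1/(K-1)) - f (A+K-2+(B-B')/(K-1)))
          + (K-1)*(K-2-B') * (f (A+K-2+(B-B')/(K-1)) -
            f (A+K-2+(B-B')/(K-1)-(K-2)/(K-1)))) := by
      linear_combination (-B') * hs1 + B' * hs2 - (K-2-B') * hs3 + (K-2-B') * hs4
        + (K-2) * hpt
    have hpos : 0 < (K-2) * ((B*(f (A+(2*K-3)) - f (A+(K-1)))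
        + (K-1-B)*(f (A+(2*K-4)) - f (A+(K-2))) + (K-2)*f (K-1))
        - (B'*(f (A'+(2*K-3)) - f (A'+(K-2))) + (K-2-B')*(f (A'+(2*K-4)) - f (A'+(K-3)))
          + (K-1)*f (K-2))) := by
      linarith [hb1, hb2, hb3, hb4, hb5, hident]
    linarith [(mul_pos_iff_of_pos_left hKm2).mp hpos]
  · -- Case I : B' + 1 ≤ B
    have hBpos : (0:ℝ) < B := by linarith
    have hu0 : 0 ≤ (B-B')/(K-1) := div_nonneg (by linarith) hKm1.le
    have hd0 : 0 ≤ B'/B := by positivity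
    have hd1 : B'/B ≤ 1 := by rw [div_le_one hBpos]; linarith
    have hu_ge_w : 1/(K-1) ≤ (B-B')/(K-1) := by
      rw [div_le_div_iff₀ hKm1 hKm1]
      linarith [mul_le_mul_of_nonneg_right (show (1:ℝ) ≤ B-B' by linarith) hKm1.le]
    have ht40 : 0 ≤ (B-B'-1)*(K-2)/((K-1)*(K-2-B')) :=
      div_nonneg (mul_nonneg (by linarith) hKm2.le) (by positivity)
    have ht4v : (B-B'-1)*(K-2)/((K-1)*(K-2-B')) ≤ (K-2)/(K-1) := by
      rw [div_le_div_iff₀ (by positivity) hKm1]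
      linarith [mul_nonneg (mul_nonneg hKm2.le hKm1.le) (show (0:ℝ) ≤ K-1-B by linarith)]
    have hb1 : (K-1)*B' * (f (A+2*K-4+(B-B')/(K-1)) -
        f (A+2*K-4+(B-B')/(K-1)-(K-2)/(K-1))) ≤
        (K-2)*B * (f (A+(2*K-3)) - f (A+2*K-3-B'/B)) := by
      apply block_le (by positivity) (by positivity) (by linarith) (by linarith) (by linarith)
        (by linarith) (by linarith)
      field_simp; ring
    have hb2 : (K-2)*(K-1) * (f (A+2*K-4+(B-B')/(K-1)-(K-2)/(K-1)) -
        f (A+2*K-4-(K-2)/(K-1))) ≤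
        (K-2)*B * (f (A+2*K-3-B'/B) - f (A+(2*K-4))) := by
      apply block_le (by positivity) (by positivity) (by linarith) (by linarith) (by linarith)
        (by linarith) (by linarith)
      field_simp; ring
    have hb3 : (K-2)*(K-1) * (f (A+2*K-4-(K-2)/(K-1)) - f (A+K-2+(B-B')/(K-1))) ≤
        (K-2)*(K-1) * (f (A+(2*K-4)) - f (A+K-2+(B-B')/(K-1)+(K-2)/(K-1))) := by
      apply block_le (by positivity) (by positivity) (by linarith) (by linarith) (by linarith)
        (by linarith) (by linarith)
      ring
    have hb4 : (K-1)*(K-2-B') * (f (A+K-2+(B-B')/(K-1)) -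
        f (A+K-2+(B-B')/(K-1)-(B-B'-1)*(K-2)/((K-1)*(K-2-B')))) ≤
        (K-2)*(K-1) * (f (A+K-2+(B-B')/(K-1)+(K-2)/(K-1)) - f (A+(K-1))) := by
      apply block_le (by positivity) (by positivity) (by linarith) (by linarith) (by linarith)
        (by linarith) (by linarith)
      field_simp; ring
    have hb5 : (K-1)*(K-2-B') *
        (f (A+K-2+(B-B')/(K-1)-(B-B'-1)*(K-2)/((K-1)*(K-2-B'))) -
          f (A+K-2+(B-B')/(K-1)-(K-2)/(K-1))) <
        (K-2)*(K-1-B) * (f (A+(K-1)) - f (A+(K-2))) := by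
      apply block_lt (mul_nonneg hKm2.le (by linarith)) (by positivity) (by linarith) (by linarith) (by linarith)
        (by linarith) (by linarith)
      · field_simp; ring
      · right; linarith
      · have h1 : (A+K-2+(B-B')/(K-1)-(B-B'-1)*(K-2)/((K-1)*(K-2-B')))
            - (A+K-2+(B-B')/(K-1)-(K-2)/(K-1))
            = (K-2)/(K-1) - (B-B'-1)*(K-2)/((K-1)*(K-2-B')) := by ring
        have h2 : (K-2)/(K-1) - (B-B'-1)*(K-2)/((K-1)*(K-2-B'))
            = (K-2)*(K-1-B)/((K-1)*(K-2-B')) := by field_simp; ring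
        rw [h1, h2]
        have hKB : (0:ℝ) < K-1-B := by linarith
        positivity
    have hident :
        (K-2) * (B*(f (A+(2*K-3)) - f (A+(K-1))) + (K-1-B)*(f (A+(2*K-4)) - f (A+(K-2)))
          + (K-2)*f (K-1))
        - (K-2) * (B'*(f (A'+(2*K-3)) - f (A'+(K-2))) + (K-2-B')*(f (A'+(2*K-4)) - f (A'+(K-3)))
          + (K-1)*f (K-2))
        = ((K-2)*B * (f (A+(2*K-3)) - f (A+2*K-3-B'/B))
          + (K-2)*B * (f (A+2*K-3-B'/B) - f (A+(2*K-4)))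
          + (K-2)*(K-1) * (f (A+(2*K-4)) - f (A+K-2+(B-B')/(K-1)+(K-2)/(K-1)))
          + (K-2)*(K-1) * (f (A+K-2+(B-B')/(K-1)+(K-2)/(K-1)) - f (A+(K-1)))
          + (K-2)*(K-1-B) * (f (A+(K-1)) - f (A+(K-2))))
        - ((K-1)*B' * (f (A+2*K-4+(B-B')/(K-1)) -
            f (A+2*K-4+(B-B')/(K-1)-(K-2)/(K-1)))
          + (K-2)*(K-1) * (f (A+2*K-4+(B-B')/(K-1)-(K-2)/(K-1)) - f (A+2*K-4-(K-2)/(K-1)))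
          + (K-2)*(K-1) * (f (A+2*K-4-(K-2)/(K-1)) - f (A+K-2+(B-B')/(K-1)))
          + (K-1)*(K-2-B') * (f (A+K-2+(B-B')/(K-1)) -
            f (A+K-2+(B-B')/(K-1)-(B-B'-1)*(K-2)/((K-1)*(K-2-B'))))
          + (K-1)*(K-2-B') *
            (f (A+K-2+(B-B')/(K-1)-(B-B'-1)*(K-2)/((K-1)*(K-2-B'))) -
              f (A+K-2+(B-B')/(K-1)-(K-2)/(K-1)))) := by
      linear_combination (-B') * hs1 + B' * hs2 - (K-2-B') * hs3 + (K-2-B') * hs4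
        + (K-2) * hpt
    have hpos : 0 < (K-2) * ((B*(f (A+(2*K-3)) - f (A+(K-1)))
        + (K-1-B)*(f (A+(2*K-4)) - f (A+(K-2))) + (K-2)*f (K-1))
        - (B'*(f (A'+(2*K-3)) - f (A'+(K-2))) + (K-2-B')*(f (A'+(2*K-4)) - f (A'+(K-3)))
          + (K-1)*f (K-2))) := by
      linarith [hb1, hb2, hb3, hb4, hb5, hident]
    linarith [(mul_pos_iff_of_pos_left hKm2).mp hpos]

/-- For `k ≥ 3` and `m ≥ C(k,2) - 1`, with `m = C(k-1,2) + a(k-1) + b` (`a ≥ 0`,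
`0 ≤ b ≤ k-2`) and `m = C(k-2,2) + a'(k-2) + b'` (`a' ≥ 2`, `0 ≤ b' ≤ k-3`), and
`m' = m + (k-1)(k-2)` having representations `(a+k-2, b)` and `(a'+k-1, b')`:
`h(C(m',k)) - h(C(m',k-1)) ≥ h(C(m,k)) - h(C(m,k-1))`, with strict inequality when
`m = C(k,2) - 1`. -/
theorem difference_grows_with_period (k m a b a' b' : ℕ) (hk : 3 ≤ k)
    (hm : k.choose 2 - 1 ≤ m) (hb : b ≤ k - 2) (ha' : 2 ≤ a') (hb' : b' ≤ k - 3)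
    (hrep : m = (k - 1).choose 2 + a * (k - 1) + b)
    (hrep' : m = (k - 2).choose 2 + a' * (k - 2) + b') :
    H k a b - H (k - 1) a' b' ≤ H k (a + k - 2) b - H (k - 1) (a' + k - 1) b' ∧
    (m = k.choose 2 - 1 →
      H k a b - H (k - 1) a' b' < H k (a + k - 2) b - H (k - 1) (a' + k - 1) b') := by
  have hk3 : (3:ℝ) ≤ (k:ℝ) := by exact_mod_cast hk
  have hc1 : ((k-1:ℕ):ℝ) = (k:ℝ)-1 := by
    rw [Nat.cast_sub (by omega)]; norm_num
  have hc2 : ((k-2:ℕ):ℝ) = (k:ℝ)-2 := by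
    rw [Nat.cast_sub (by omega)]; norm_num
  have hc3 : ((k-3:ℕ):ℝ) = (k:ℝ)-3 := by
    rw [Nat.cast_sub (by omega)]; norm_num
  have hcak : ((a+k-2:ℕ):ℝ) = (a:ℝ)+((k:ℝ)-2) := by
    rw [show a+k-2 = a+(k-2) by omega, Nat.cast_add, hc2]
  have hcak' : ((a'+k-1:ℕ):ℝ) = (a':ℝ)+((k:ℝ)-1) := by
    rw [show a'+k-1 = a'+(k-1) by omega, Nat.cast_add, hc1]
  have hBle : (b:ℝ) ≤ (k:ℝ)-2 := by rw [← hc2]; exact_mod_cast hb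
  have hB'le : (b':ℝ) ≤ (k:ℝ)-3 := by rw [← hc3]; exact_mod_cast hb'
  have hrel : (a':ℝ)*((k:ℝ)-2) = (a:ℝ)*((k:ℝ)-1) + (b:ℝ) + ((k:ℝ)-2) - (b':ℝ) := by
    have h : (k - 1).choose 2 + a * (k - 1) + b = (k - 2).choose 2 + a' * (k - 2) + b' :=
      hrep.symm.trans hrep'
    have h2 := congrArg (fun n : ℕ => (n:ℝ)) h
    push_cast at h2
    rw [Nat.cast_choose_two, Nat.cast_choose_two, hc1, hc2] at h2
    linear_combination -h2
  have hcaseN : (b:ℝ) ≤ (b':ℝ) ∨ (b':ℝ)+1 ≤ (b:ℝ) := by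
    rcases le_or_gt b b' with h | h
    · left; exact_mod_cast h
    · right; exact_mod_cast h
  have KEY := key (k:ℝ) (a:ℝ) (b:ℝ) (b':ℝ) (a':ℝ) hk3 (by positivity) (by positivity)
    hBle (by positivity) hB'le hrel hcaseN
  have e1 : H k (a+k-2) b = (b:ℝ) * f ((a:ℝ)+(2*(k:ℝ)-3))
      + ((k:ℝ)-1-(b:ℝ)) * f ((a:ℝ)+(2*(k:ℝ)-4))
      + ((a:ℝ)+((k:ℝ)-2)) * f ((k:ℝ)-1) + f (b:ℝ) := by
    simp only [H]
    rw [hcak, show (k:ℝ)-1+((a:ℝ)+((k:ℝ)-2)) = (a:ℝ)+(2*(k:ℝ)-3) by ring,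
      show (k:ℝ)-2+((a:ℝ)+((k:ℝ)-2)) = (a:ℝ)+(2*(k:ℝ)-4) by ring]
  have e2 : H k a b = (b:ℝ) * f ((a:ℝ)+((k:ℝ)-1))
      + ((k:ℝ)-1-(b:ℝ)) * f ((a:ℝ)+((k:ℝ)-2))
      + (a:ℝ) * f ((k:ℝ)-1) + f (b:ℝ) := by
    simp only [H]
    rw [show (k:ℝ)-1+(a:ℝ) = (a:ℝ)+((k:ℝ)-1) by ring,
      show (k:ℝ)-2+(a:ℝ) = (a:ℝ)+((k:ℝ)-2) by ring]
  have e3 : H (k-1) (a'+k-1) b' = (b':ℝ) * f ((a':ℝ)+(2*(k:ℝ)-3))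
      + ((k:ℝ)-2-(b':ℝ)) * f ((a':ℝ)+(2*(k:ℝ)-4))
      + ((a':ℝ)+((k:ℝ)-1)) * f ((k:ℝ)-2) + f (b':ℝ) := by
    simp only [H]
    rw [hc1, hcak', show (k:ℝ)-1-1+((a':ℝ)+((k:ℝ)-1)) = (a':ℝ)+(2*(k:ℝ)-3) by ring,
      show (k:ℝ)-1-2+((a':ℝ)+((k:ℝ)-1)) = (a':ℝ)+(2*(k:ℝ)-4) by ring,
      show (k:ℝ)-1-1 = (k:ℝ)-2 by ring]
  have e4 : H (k-1) a' b' = (b':ℝ) * f ((a':ℝ)+((k:ℝ)-2))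
      + ((k:ℝ)-2-(b':ℝ)) * f ((a':ℝ)+((k:ℝ)-3))
      + (a':ℝ) * f ((k:ℝ)-2) + f (b':ℝ) := by
    simp only [H]
    rw [hc1, show (k:ℝ)-1-1+(a':ℝ) = (a':ℝ)+((k:ℝ)-2) by ring,
      show (k:ℝ)-1-2+(a':ℝ) = (a':ℝ)+((k:ℝ)-3) by ring,
      show (k:ℝ)-1-1 = (k:ℝ)-2 by ring]
  constructor
  · linarith [KEY, e1, e2, e3, e4]
  · intro _
    linarith [KEY, e1, e2, e3, e4]
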